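/- Suppose f(n,·,·) satisfies the one-sided Lipschitz condition f(n,x₁,x₃) − f(n,x₂,x₄) ≤ P(n)(x₁−x₂) + K(n)(x₃−x₄) for x₁ ≤ x₂ and x₃ ≤ x₄, with P(n) > 0 and K(n) < 1. If α satisfies α(n+1) ≤ f(n,α(n),α(n+1)) and α¹ is defined (implicitly) by α¹(n+1) = P(n)α¹(n) + K(n)α¹(n+1) + f(n,α(n),α(n+1)) − P(n)α(n) − K(n)α(n+1) with α¹(n₀) ≥ α(n₀), then α(n) ≤ α¹(n) for all n in [n₀, N]. -/

import Mathlib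

/-- One step of the monotone iterative scheme (no impulses): the next iterate
dominates the lower solution. -/
theorem stmt_10 (n₀ N : ℤ) (f : ℤ → ℝ → ℝ → ℝ) (P K : ℤ → ℝ)
    (hP : ∀ n : ℤ, n₀ ≤ n → n ≤ N - 1 → P n > 0)
    (hK : ∀ n : ℤ, n₀ ≤ n → n ≤ N - 1 → K n < 1)
    (hf : ∀ n : ℤ, n₀ ≤ n → n ≤ N - 1 → ∀ x₁ x₂ x₃ x₄ : ℝ, x₁ ≤ x₂ → x₃ ≤ x₄ →
      f n x₁ x₃ - f n x₂ x₄ ≤ P n * (x₁ - x₂) + K n * (x₃ - x₄))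
    (α α₁ : ℤ → ℝ)
    (hlow : ∀ n : ℤ, n₀ ≤ n → n ≤ N - 1 → α (n + 1) ≤ f n (α n) (α (n + 1)))
    (heq : ∀ n : ℤ, n₀ ≤ n → n ≤ N - 1 →
      α₁ (n + 1) = P n * α₁ n + K n * α₁ (n + 1)
        + f n (α n) (α (n + 1)) - P n * α n - K n * α (n + 1))
    (h0 : α n₀ ≤ α₁ n₀) :
    ∀ n : ℤ, n₀ ≤ n → n ≤ N → α n ≤ α₁ n := by
  intro n hn
  refine Int.le_induction (motive := fun n _ => n ≤ N → α n ≤ α₁ n) ?_ ?_ n hn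
  · intro _; exact h0
  · intro n hn ih hN
    have hn1 : n ≤ N - 1 := by omega
    have ihn : α n ≤ α₁ n := ih (by omega)
    have hKn := hK n hn hn1
    have hPn := hP n hn hn1
    have hl := hlow n hn hn1
    have he := heq n hn hn1
    have key : (1 - K n) * (α₁ (n+1) - α (n+1)) ≥ P n * (α₁ n - α n) := by
      nlinarith [he, hl]
    nlinarith [mul_nonneg hPn.le (sub_nonneg.mpr ihn)]
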